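/- For every b > 0, the matrix A[2, b, 1/b] admits the decomposition A[2, b, 1/b] = (1/(3b)) ∑_{i=1}^{3} ∑_{ω ∈ Ω} z_i(ω) z_i(ω)*, where Ω is the set of third roots of unity; in particular A[2, b, 1/b] is separable. -/

import Mathlib

open Matrix BigOperators
open scoped ComplexOrder

/-- Index set for `M₃ ⊗ M₃ ≅ M₉`: pairs `(i,k)` with `i,k ∈ Fin 3`. -/
abbrev Idx : Type := Fin 3 × Fin 3

/-- `M₃ ⊗ M₃`, identified with 9×9 complex matrices. -/
abbrev M9 : Type := Matrix Idx Idx ℂ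

/-- Vectors in `ℂ³ ⊗ ℂ³ ≅ ℂ⁹`. -/
abbrev V9 : Type := Idx → ℂ

/-- The product vector `x ⊗ y`, with entries `(x⊗y)(i,k) = x i * y k`. -/
def prodVec (x y : Fin 3 → ℂ) : V9 := fun p => x p.1 * y p.2

/-- Entrywise complex conjugate of a vector in `ℂ³`. -/
def conjVec (x : Fin 3 → ℂ) : Fin 3 → ℂ := fun i => (starRingEnd ℂ) (x i)

/-- The rank-one matrix `z z*`. -/
def rankOne (z : V9) : M9 := Matrix.vecMulVec z (fun p => (starRingEnd ℂ) (z p))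

/-- The partial transpose: `A^Γ((i,k),(j,l)) = A((j,k),(i,l))`. -/
def ptrans (A : M9) : M9 := fun p q => A (q.1, p.2) (p.1, q.2)

/-- The range of a matrix `A`, as a subspace of `ℂ⁹`. -/
noncomputable def MatRange (A : M9) : Submodule ℂ V9 := LinearMap.range A.mulVecLin

/-- `A` is separable: a finite sum of `(x⊗y)(x⊗y)*` over product vectors. -/
def IsSep (A : M9) : Prop :=
  ∃ (n : ℕ) (x y : Fin n → Fin 3 → ℂ),
    A = ∑ ι : Fin n, rankOne (prodVec (x ι) (y ι))

/-- The convex cone `V₁` of all separable matrices. -/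
def V1 : Set M9 := {A | IsSep A}

/-- `A` is PPT: both `A` and `A^Γ` are positive semidefinite. -/
def IsPPT (A : M9) : Prop := A.PosSemidef ∧ (ptrans A).PosSemidef

/-- The convex cone `𝕋` of all PPT matrices. -/
def Tcone : Set M9 := {A | IsPPT A}

/-- `F` is a face of the convex set `C`. -/
def IsFaceOf (F C : Set M9) : Prop :=
  F ⊆ C ∧ Convex ℝ F ∧
    ∀ x ∈ C, ∀ y ∈ C, ∀ t : ℝ, 0 < t → t < 1 →
      (1 - t) • x + t • y ∈ F → x ∈ F ∧ y ∈ F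

/-- The smallest face of `C` containing `A`. -/
def smallestFace (C : Set M9) (A : M9) : Set M9 := ⋂₀ {F | IsFaceOf F C ∧ A ∈ F}

/-- `P[A]`: product vectors `z` with `z z* ∈ V₁[A]`. -/
def Pvecs (A : M9) : Set V9 :=
  {z | (∃ x y : Fin 3 → ℂ, z = prodVec x y) ∧ rankOne z ∈ smallestFace V1 A}

/-- `Q[A]`: product vectors `x⊗y` with `x⊗y ∈ range A` and `x̄⊗y ∈ range A^Γ`. -/
def Qvecs (A : M9) : Set V9 :=
  {z | ∃ x y : Fin 3 → ℂ, z = prodVec x y ∧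
    prodVec x y ∈ MatRange A ∧ prodVec (conjVec x) y ∈ MatRange (ptrans A)}

/-- The face `𝕋[A]` of the PPT cone determined by `A`. -/
def TFace (A : M9) : Set M9 :=
  {B | IsPPT B ∧ MatRange B ≤ MatRange A ∧ MatRange (ptrans B) ≤ MatRange (ptrans A)}

/-- `x` is an interior point of the convex set `C`. -/
def IsInteriorPt (x : M9) (C : Set M9) : Prop :=
  x ∈ C ∧ ∀ y ∈ C, ∃ t : ℝ, 1 < t ∧ (1 - t) • y + t • x ∈ C

/-- The matrix `A[a,b,c]` of the paper. -/
def Amat (a b c : ℝ) : M9 := fun p q =>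
  if p = q then
    (if p.1 = p.2 then (a : ℂ) else if p.2 = p.1 + 1 then (c : ℂ) else (b : ℂ))
  else if p.1 = p.2 ∧ q.1 = q.2 then 1 else 0

/-- `Ω = {1, e^{2πi/3}, e^{-2πi/3}}`, the third roots of unity, as a triple. -/
noncomputable def Om : Fin 3 → ℂ :=
  ![1, Complex.exp (((2 * Real.pi / 3 : ℝ) : ℂ) * Complex.I),
      Complex.exp (-(((2 * Real.pi / 3 : ℝ) : ℂ) * Complex.I))]

/-- The product vectors `z₁(ω), z₂(ω), z₃(ω)`. -/
noncomputable def zvec (b : ℝ) : Fin 3 → ℂ → V9 :=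
  ![fun ω => prodVec ![0, 1, (Real.sqrt b : ℂ) * ω] ![0, (Real.sqrt b : ℂ), star ω],
    fun ω => prodVec ![(Real.sqrt b : ℂ) * ω, 0, 1] ![star ω, 0, (Real.sqrt b : ℂ)],
    fun ω => prodVec ![1, (Real.sqrt b : ℂ) * ω, 0] ![(Real.sqrt b : ℂ), star ω, 0]]


/-- auxiliary: the primitive third root of unity. -/
noncomputable def wA : ℂ := Complex.exp (((2 * Real.pi / 3 : ℝ) : ℂ) * Complex.I)

theorem wA_pow3 : wA^3 = 1 := by
  rw [wA, ← Complex.exp_nat_mul]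
  rw [show ((3:ℕ):ℂ) * (((2 * Real.pi / 3 : ℝ) : ℂ) * Complex.I) = 2*Real.pi*Complex.I by push_cast; ring]
  exact Complex.exp_two_pi_mul_I

theorem wA_ne_one : wA ≠ 1 := by
  intro h
  have him : wA.im = Real.sin (2 * Real.pi / 3) := by
    rw [wA]; exact Complex.exp_ofReal_mul_I_im _
  have : Real.sin (2 * Real.pi / 3) > 0 := by
    apply Real.sin_pos_of_pos_of_lt_pi <;> nlinarith [Real.pi_pos]
  rw [h] at him; simp at him; linarith

theorem wA_sq : wA^2 = -wA - 1 := by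
  have h : (wA - 1) * (wA^2 + wA + 1) = 0 := by linear_combination wA_pow3
  rcases mul_eq_zero.mp h with h1 | h2
  · exact absurd (sub_eq_zero.mp h1) wA_ne_one
  · linear_combination h2

theorem wA_star : (starRingEnd ℂ) wA = wA^2 := by
  have habs : ‖wA‖ = 1 := by rw [wA]; exact Complex.norm_exp_ofReal_mul_I _
  have h1 : (starRingEnd ℂ) wA * wA = 1 := by
    rw [mul_comm, Complex.mul_conj, Complex.normSq_eq_norm_sq, habs]; norm_num
  have h2 : (starRingEnd ℂ) wA * wA^3 = wA^2 := by linear_combination wA^2 * h1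
  rw [wA_pow3, mul_one] at h2; exact h2

theorem Om_eq : Om = ![1, wA, wA^2] := by
  funext j
  fin_cases j
  · rfl
  · rfl
  · show Complex.exp _ = wA^2
    rw [Complex.exp_neg]
    show wA⁻¹ = wA^2
    exact inv_eq_of_mul_eq_one_right (show wA * wA^2 = 1 by linear_combination wA_pow3)

/-- The left factors of the `zvec` product vectors. -/
noncomputable def Xv (b : ℝ) : Fin 3 → ℂ → Fin 3 → ℂ :=
  ![fun ω => ![0, 1, (Real.sqrt b : ℂ) * ω],
    fun ω => ![(Real.sqrt b : ℂ) * ω, 0, 1],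
    fun ω => ![1, (Real.sqrt b : ℂ) * ω, 0]]

/-- The right factors of the `zvec` product vectors. -/
noncomputable def Yv (b : ℝ) : Fin 3 → ℂ → Fin 3 → ℂ :=
  ![fun ω => ![0, (Real.sqrt b : ℂ), star ω],
    fun ω => ![star ω, 0, (Real.sqrt b : ℂ)],
    fun ω => ![(Real.sqrt b : ℂ), star ω, 0]]

theorem zvec_eq_prodVec (b : ℝ) (i : Fin 3) (ω : ℂ) :
    zvec b i ω = prodVec (Xv b i ω) (Yv b i ω) := by
  fin_cases i <;> rfl

/-- auxiliary equivalence `Fin 9 ≃ Fin 3 × Fin 3`. -/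
def e9 : Fin 9 ≃ Fin 3 × Fin 3 :=
  (finCongr (by norm_num) : Fin 9 ≃ Fin (3*3)).trans finProdFinEquiv.symm

theorem rankOne_smul_real (r : ℝ) (x y : Fin 3 → ℂ) :
    rankOne (prodVec (fun i => (r:ℂ) * x i) y) = ((r^2 : ℝ) : ℂ) • rankOne (prodVec x y) := by
  ext p q
  simp [rankOne, Matrix.vecMulVec_apply, prodVec, Matrix.smul_apply, _root_.map_mul,
    Complex.conj_ofReal]
  ring

set_option maxHeartbeats 2000000 in
theorem decompA (b : ℝ) (hb : 0 < b) :
    Amat 2 b (1 / b) =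
        ((1 / (3 * b) : ℝ) : ℂ) • ∑ i : Fin 3, ∑ j : Fin 3, rankOne (zvec b i (Om j)) := by
  have hb0 : (b:ℂ) ≠ 0 := by exact_mod_cast hb.ne'
  have hs2 : ((Real.sqrt b : ℂ))^2 = (b:ℂ) := by
    rw [← Complex.ofReal_pow, Real.sq_sqrt hb.le]
  have hs3 : ((Real.sqrt b : ℂ))^3 = (b:ℂ) * (Real.sqrt b : ℂ) := by
    linear_combination (Real.sqrt b : ℂ) * hs2
  have hs4 : ((Real.sqrt b : ℂ))^4 = (b:ℂ)^2 := by
    linear_combination (((Real.sqrt b : ℂ))^2 + (b:ℂ)) * hs2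
  have h4 : wA^4 = wA := by linear_combination wA * wA_pow3
  have h5 : wA^5 = wA^2 := by linear_combination wA^2 * wA_pow3
  have h6 : wA^6 = 1 := by linear_combination (wA^3 + 1) * wA_pow3
  have h7 : wA^7 = wA := by linear_combination (wA^4 + wA) * wA_pow3
  have h8 : wA^8 = wA^2 := by linear_combination (wA^5 + wA^2) * wA_pow3
  have h9 : wA^9 = 1 := by linear_combination (wA^6 + wA^3 + 1) * wA_pow3
  have h10 : wA^10 = wA := by linear_combination (wA^7 + wA^4 + wA) * wA_pow3
  have h11 : wA^11 = wA^2 := by linear_combination (wA^8 + wA^5 + wA^2) * wA_pow3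
  have h12 : wA^12 = 1 := by linear_combination (wA^9 + wA^6 + wA^3 + 1) * wA_pow3
  have h13 : wA^13 = wA := by linear_combination (wA^10 + wA^7 + wA^4 + wA) * wA_pow3
  have h14 : wA^14 = wA^2 := by linear_combination (wA^11 + wA^8 + wA^5 + wA^2) * wA_pow3
  have h15 : wA^15 = 1 := by linear_combination (wA^12 + wA^9 + wA^6 + wA^3 + 1) * wA_pow3
  have h16 : wA^16 = wA := by linear_combination (wA^13 + wA^10 + wA^7 + wA^4 + wA) * wA_pow3
  have h17 : wA^17 = wA^2 := by linear_combination (wA^14 + wA^11 + wA^8 + wA^5 + wA^2) * wA_pow3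
  have h18 : wA^18 = 1 := by linear_combination (wA^15 + wA^12 + wA^9 + wA^6 + wA^3 + 1) * wA_pow3
  have h19 : wA^19 = wA := by linear_combination (wA^16 + wA^13 + wA^10 + wA^7 + wA^4 + wA) * wA_pow3
  have h20 : wA^20 = wA^2 := by linear_combination (wA^17 + wA^14 + wA^11 + wA^8 + wA^5 + wA^2) * wA_pow3
  have h21 : wA^21 = 1 := by linear_combination (wA^18 + wA^15 + wA^12 + wA^9 + wA^6 + wA^3 + 1) * wA_pow3
  have h22 : wA^22 = wA := by linear_combination (wA^19 + wA^16 + wA^13 + wA^10 + wA^7 + wA^4 + wA) * wA_pow3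
  have h23 : wA^23 = wA^2 := by linear_combination (wA^20 + wA^17 + wA^14 + wA^11 + wA^8 + wA^5 + wA^2) * wA_pow3
  have h24 : wA^24 = 1 := by linear_combination (wA^21 + wA^18 + wA^15 + wA^12 + wA^9 + wA^6 + wA^3 + 1) * wA_pow3
  ext p q
  simp only [Matrix.smul_apply, Matrix.sum_apply, Fin.sum_univ_three, Om_eq, zvec]
  fin_cases p <;> fin_cases q <;>
    · simp [Amat, rankOne, Matrix.vecMulVec_apply, prodVec, wA_star, Prod.ext_iff]
      try field_simp
      try ring_nf
      try simp only [wA_pow3, hs2, hs3, hs4, h4, h5, h6, h7, h8, h9, h10, h11, h12, h13, h14,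
        h15, h16, h17, h18, h19, h20, h21, h22, h23, h24]
      try ring_nf
      try simp only [wA_sq, wA_pow3, hs2, hs3, hs4]
      try ring_nf
      try simp only [wA_sq, wA_pow3, hs2, hs3, hs4]
      try ring_nf
      try tauto

/-- `A[2,b,1/b] = (1/3b) ∑_{i=1}^{3} ∑_{ω ∈ Ω} zᵢ(ω)zᵢ(ω)*`;
in particular it is separable. -/
theorem stmt8 (b : ℝ) (hb : 0 < b) :
    (Amat 2 b (1 / b) =
        ((1 / (3 * b) : ℝ) : ℂ) • ∑ i : Fin 3, ∑ j : Fin 3, rankOne (zvec b i (Om j))) ∧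
    IsSep (Amat 2 b (1 / b)) := by
  refine ⟨decompA b hb, ?_⟩
  set r : ℝ := Real.sqrt (1 / (3 * b)) with hr
  have hr2 : ((r^2 : ℝ) : ℂ) = ((1 / (3 * b) : ℝ) : ℂ) := by
    rw [hr, Real.sq_sqrt (by positivity)]
  refine ⟨9, fun ι => fun i => (r:ℂ) * Xv b (e9 ι).1 (Om (e9 ι).2) i,
    fun ι => Yv b (e9 ι).1 (Om (e9 ι).2), ?_⟩
  have hterm : ∀ ι : Fin 9,
      rankOne (prodVec (fun i => (r:ℂ) * Xv b (e9 ι).1 (Om (e9 ι).2) i)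
        (Yv b (e9 ι).1 (Om (e9 ι).2)))
      = ((1 / (3 * b) : ℝ) : ℂ) • rankOne (zvec b (e9 ι).1 (Om (e9 ι).2)) := by
    intro ι
    rw [rankOne_smul_real, hr2, zvec_eq_prodVec]
  calc Amat 2 b (1 / b)
      = ((1 / (3 * b) : ℝ) : ℂ) • ∑ i : Fin 3, ∑ j : Fin 3, rankOne (zvec b i (Om j)) :=
        decompA b hb
    _ = ((1 / (3 * b) : ℝ) : ℂ) • ∑ p : Fin 3 × Fin 3, rankOne (zvec b p.1 (Om p.2)) := by
        congr 1
        exact (Fintype.sum_prod_type (f := fun p : Fin 3 × Fin 3 => rankOne (zvec b p.1 (Om p.2)))).symm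
    _ = ((1 / (3 * b) : ℝ) : ℂ) • ∑ ι : Fin 9, rankOne (zvec b (e9 ι).1 (Om (e9 ι).2)) := by
        rw [← Equiv.sum_comp e9
          (fun p => rankOne (zvec b p.1 (Om p.2)))]
    _ = ∑ ι : Fin 9, ((1 / (3 * b) : ℝ) : ℂ) • rankOne (zvec b (e9 ι).1 (Om (e9 ι).2)) := by
        rw [Finset.smul_sum]
    _ = _ := by
        exact (Finset.sum_congr rfl (fun ι _ => (hterm ι).symm))
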